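/- If monomials m_1,...,m_s in a skew polynomial ring have pairwise disjoint supports, then the skew Koszul complex K(m_1,...,m_s) and the skew Taylor complex T(m_1,...,m_s) are isomorphic as complexes of R-modules, via the chain isomorphism ψ(e_σ) = e_σ · Π_{r=2}^{j} C(m_{i_1}*···*m_{i_{r-1}}, m_{i_r})^{-1} for σ = {i_1 < ··· < i_j}. -/

import Mathlib

open Finset

/-- Bundled data of a skew polynomial ring `k_q[x_1,...,x_n]`: an algebra `R` over `k`
with quantum parameters `q`, skew-commuting variables `x i`, a linearly independent
family of sorted monomials `x^a = x_1^{a_1} ⋯ x_n^{a_n}`, and the bicharacter `C`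
defined by the equation `x^a · x^b = C(a,b) • x^(a+b)`. -/
structure SkewPoly (k : Type) [Field k] (n : ℕ) (R : Type) [Ring R] [Algebra k R] : Type where
  q : Fin n → Fin n → kˣ
  q_symm : ∀ i j, q j i = (q i j)⁻¹
  q_diag : ∀ i, q i i = 1
  x : Fin n → R
  x_comm : ∀ i j, x i * x j = ((q i j : kˣ) : k) • (x j * x i)
  C : (Fin n → ℕ) → (Fin n → ℕ) → kˣ
  C_spec : ∀ a b : Fin n → ℕ,
    (((List.finRange n).map fun i => x i ^ a i).prod) *
      (((List.finRange n).map fun i => x i ^ b i).prod) =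
      ((C a b : kˣ) : k) • (((List.finRange n).map fun i => x i ^ (a i + b i)).prod)
  linInd : LinearIndependent k
    (fun a : Fin n → ℕ => (((List.finRange n).map fun i => x i ^ a i).prod))

/-- The sorted monomial `x^a = x_1^{a_1} ⋯ x_n^{a_n}`. -/
def SkewPoly.mono {k : Type} [Field k] {n : ℕ} {R : Type} [Ring R] [Algebra k R]
    (S : SkewPoly k n R) (a : Fin n → ℕ) : R :=
  ((List.finRange n).map fun i => S.x i ^ a i).prod

/-- Exponent vector of the least common multiple `m_σ` of the monomials `m i`, `i ∈ σ`. -/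
def lcmE {n s : ℕ} (m : Fin s → Fin n → ℕ) (σ : Finset (Fin s)) : Fin n → ℕ :=
  fun t => σ.sup fun i => m i t

/-- Total differential of the skew Taylor complex of `m_1,…,m_s` twisted by the monomial `x^u`,
acting on coordinates with respect to the basis `e(σ;u)`, `σ ⊆ [s]` (the untwisted complex is
the case `u = 0`):
`∂(e(σ;u)) = Σ_{i∈σ} e(σ\{i};u)·(-1)^{α(σ;i)}·C(m_{σ\{i}} * u, m_σ/m_{σ\{i}})⁻¹·(m_σ/m_{σ\{i}})`. -/
noncomputable def taylorD {k : Type} [Field k] {n : ℕ} {R : Type} [Ring R] [Algebra k R]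
    {s : ℕ} (S : SkewPoly k n R) (m : Fin s → Fin n → ℕ) (u : Fin n → ℕ)
    (f : Finset (Fin s) → R) : Finset (Fin s) → R :=
  fun τ => ∑ i ∈ τᶜ,
    (-1 : R) ^ ((τ.filter (· < i)).card) *
      algebraMap k R (((S.C (lcmE m τ + u) (lcmE m (insert i τ) - lcmE m τ))⁻¹ : kˣ) : k) *
      S.mono (lcmE m (insert i τ) - lcmE m τ) * f (insert i τ)

/-- The alternating bicharacter `χ` with `χ(σ_i,σ_j) = q_{ij}`. -/
def SkewPoly.chi {k : Type} [Field k] {n : ℕ} {R : Type} [Ring R] [Algebra k R]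
    (S : SkewPoly k n R) (a b : Fin n → ℕ) : kˣ :=
  ∏ i : Fin n, ∏ j : Fin n, S.q i j ^ (a i * b j)

/-- Total differential of the skew Koszul complex on the monomials `m_1,…,m_s`:
`∂^K(e_σ) = Σ_{r=1}^{j} (-1)^{r-1} e_{σ\{i_r}} · χ(m_{i_r}, m_{i_{r+1}}*⋯*m_{i_j}) · m_{i_r}`
for `σ = {i_1 < ⋯ < i_j}`. -/
noncomputable def koszulD {k : Type} [Field k] {n : ℕ} {R : Type} [Ring R] [Algebra k R]
    {s : ℕ} (S : SkewPoly k n R) (m : Fin s → Fin n → ℕ)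
    (f : Finset (Fin s) → R) : Finset (Fin s) → R :=
  fun τ => ∑ i ∈ τᶜ,
    (-1 : R) ^ ((τ.filter (· < i)).card) *
      algebraMap k R ((S.chi (m i) (∑ j ∈ τ.filter (fun j => i < j), m j) : kˣ) : k) *
      S.mono (m i) * f (insert i τ)

section Lemmas
variable {k : Type} [Field k] {n : ℕ} {R : Type} [Ring R] [Algebra k R]
  (S : SkewPoly k n R)

lemma SkewPoly.mono_ne_zero (a : Fin n → ℕ) : S.mono a ≠ 0 := S.linInd.ne_zero a

lemma SkewPoly.mono_spec (a b : Fin n → ℕ) :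
    S.mono a * S.mono b = ((S.C a b : kˣ) : k) • S.mono (a + b) := S.C_spec a b

lemma smul_cancel_k {c d : k} {v : R} (hv : v ≠ 0) (h : c • v = d • v) : c = d := by
  by_contra hcd
  have h1 : (c - d) • v = 0 := by rw [sub_smul, h, sub_self]
  have h2 : (c - d) ≠ 0 := sub_ne_zero.mpr hcd
  have : v = 0 := by
    have := congrArg (fun w => (c - d)⁻¹ • w) h1
    simpa [smul_smul, inv_mul_cancel₀ h2] using this
  exact hv this

lemma units_smul_cancel {u w : kˣ} {v : R} (hv : v ≠ 0)
    (h : ((u : k)) • v = ((w : k)) • v) : u = w :=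
  Units.ext (smul_cancel_k hv h)

lemma SkewPoly.x_comm_pow (i j : Fin n) (c b : ℕ) :
    S.x i ^ c * S.x j ^ b = ((S.q i j ^ (c * b) : kˣ) : k) • (S.x j ^ b * S.x i ^ c) := by
  have key : ∀ b : ℕ, S.x i * S.x j ^ b
      = ((S.q i j ^ b : kˣ) : k) • (S.x j ^ b * S.x i) := by
    intro b
    induction b with
    | zero => simp
    | succ b ih =>
      rw [pow_succ, ← mul_assoc, ih, smul_mul_assoc, mul_assoc, S.x_comm i j,
        mul_smul_comm, smul_smul, pow_succ]
      push_cast [pow_succ]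
      ring_nf
      simp [mul_assoc, mul_comm]
  induction c with
  | zero => simp
  | succ c ih =>
    rw [pow_succ, mul_assoc, key, mul_smul_comm, ← mul_assoc, ih, smul_mul_assoc,
      smul_smul, mul_assoc]
    congr 1
    push_cast [pow_add, pow_mul, pow_succ]
    ring
lemma SkewPoly.list_comm (a : Fin n → ℕ) (j : Fin n) (b : ℕ) (L : List (Fin n)) :
    (L.map fun i => S.x i ^ a i).prod * S.x j ^ b
      = (((L.map fun i => S.q i j ^ (a i * b)).prod : kˣ) : k) •
        (S.x j ^ b * (L.map fun i => S.x i ^ a i).prod) := by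
  induction L with
  | nil => simp
  | cons i L ih =>
    simp only [List.map_cons, List.prod_cons]
    rw [mul_assoc, ih, mul_smul_comm, ← mul_assoc, S.x_comm_pow i j (a i) b,
      smul_mul_assoc, smul_smul, mul_assoc]
    congr 1
    push_cast
    ring

lemma SkewPoly.list_list_comm (a b : Fin n → ℕ) (L M : List (Fin n)) :
    (L.map fun i => S.x i ^ a i).prod * (M.map fun j => S.x j ^ b j).prod
      = (((M.map fun j => (L.map fun i => S.q i j ^ (a i * b j)).prod).prod : kˣ) : k) •
        ((M.map fun j => S.x j ^ b j).prod * (L.map fun i => S.x i ^ a i).prod) := by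
  induction M with
  | nil => simp
  | cons j M ih =>
    simp only [List.map_cons, List.prod_cons]
    rw [← mul_assoc, S.list_comm a j (b j) L, smul_mul_assoc, mul_assoc, ih,
      mul_smul_comm, smul_smul, ← mul_assoc]
    congr 1

lemma SkewPoly.mono_comm (a b : Fin n → ℕ) :
    S.mono a * S.mono b = ((S.chi a b : kˣ) : k) • (S.mono b * S.mono a) := by
  have h := S.list_list_comm a b (List.finRange n) (List.finRange n)
  simp only [SkewPoly.mono]
  rw [h]
  congr 2
  rw [SkewPoly.chi]
  rw [← Fin.prod_univ_def (fun j => ((List.finRange n).map fun i => S.q i j ^ (a i * b j)).prod)]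
  rw [Finset.prod_comm]
  exact Finset.prod_congr rfl fun j _ => (Fin.prod_univ_def fun i => S.q i j ^ (a i * b j)).symm

lemma SkewPoly.chi_add_right (a b c : Fin n → ℕ) :
    S.chi a (b + c) = S.chi a b * S.chi a c := by
  simp only [SkewPoly.chi, Pi.add_apply, mul_add, pow_add, ← Finset.prod_mul_distrib]

lemma SkewPoly.chi_symm (a b : Fin n → ℕ) : S.chi b a = (S.chi a b)⁻¹ := by
  simp only [SkewPoly.chi, ← Finset.prod_inv_distrib]
  rw [Finset.prod_comm]
  refine Finset.prod_congr rfl fun i _ => Finset.prod_congr rfl fun j _ => ?_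
  rw [S.q_symm i j, inv_pow, mul_comm (b j) (a i)]
lemma SkewPoly.C_skew (a b : Fin n → ℕ) : S.C a b = S.chi a b * S.C b a := by
  have h1 := S.mono_spec a b
  have h2 := S.mono_spec b a
  have h3 := S.mono_comm a b
  rw [h3, h2, smul_smul, add_comm b a, ← Units.val_mul] at h1
  exact (units_smul_cancel (S.mono_ne_zero (a + b)) h1).symm

lemma SkewPoly.C_cocycle (a b c : Fin n → ℕ) :
    S.C a b * S.C (a + b) c = S.C b c * S.C a (b + c) := by
  have h1 : (S.mono a * S.mono b) * S.mono c
      = (((S.C a b * S.C (a + b) c : kˣ) : k)) • S.mono (a + b + c) := by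
    rw [S.mono_spec a b, smul_mul_assoc, S.mono_spec (a + b) c, smul_smul]
    push_cast; ring_nf
  have h2 : S.mono a * (S.mono b * S.mono c)
      = (((S.C b c * S.C a (b + c) : kˣ) : k)) • S.mono (a + b + c) := by
    rw [S.mono_spec b c, mul_smul_comm, S.mono_spec a (b + c), smul_smul, add_assoc]
    push_cast; ring_nf
  exact units_smul_cancel (S.mono_ne_zero (a + b + c)) (by rw [← h1, ← h2, mul_assoc])

/-- Telescoping product over a finset, ordered by `<`. -/
lemma telescope_prod {G : Type} [CommGroup G] {s' : ℕ} (g : (Fin n → ℕ) → G)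
    (v : Fin s' → Fin n → ℕ) (A : Fin n → ℕ) (τ' : Finset (Fin s')) :
    ∏ l ∈ τ', (g (A + ∑ j ∈ τ'.filter (· ≤ l), v j) *
        (g (A + ∑ j ∈ τ'.filter (· < l), v j))⁻¹)
      = g (A + ∑ j ∈ τ', v j) * (g A)⁻¹ := by
  induction τ' using Finset.induction_on_max with
  | empty => simp
  | insert a t ha ih =>
    have hat : a ∉ t := fun h => absurd rfl (ne_of_lt (ha a h)).symm
    rw [Finset.prod_insert hat, Finset.sum_insert hat]
    have hfle : (insert a t).filter (· ≤ a) = insert a t := by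
      refine Finset.filter_true_of_mem fun x hx => ?_
      rcases Finset.mem_insert.mp hx with h | h
      · exact le_of_eq h
      · exact le_of_lt (ha x h)
    have hflt : (insert a t).filter (· < a) = t := by
      ext x
      simp only [Finset.mem_filter, Finset.mem_insert]
      constructor
      · rintro ⟨h | h, hlt⟩
        · exact absurd hlt (by simp [h])
        · exact h
      · exact fun h => ⟨Or.inr h, ha x h⟩
    have hrest : ∀ l ∈ t,
        (g (A + ∑ j ∈ (insert a t).filter (· ≤ l), v j) *
          (g (A + ∑ j ∈ (insert a t).filter (· < l), v j))⁻¹)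
        = (g (A + ∑ j ∈ t.filter (· ≤ l), v j) *
          (g (A + ∑ j ∈ t.filter (· < l), v j))⁻¹) := by
      intro l hl
      have h1 : (insert a t).filter (· ≤ l) = t.filter (· ≤ l) := by
        rw [Finset.filter_insert, if_neg (not_le.mpr (ha l hl))]
      have h2 : (insert a t).filter (· < l) = t.filter (· < l) := by
        rw [Finset.filter_insert, if_neg (not_lt.mpr (le_of_lt (ha l hl)))]
      rw [h1, h2]
    rw [Finset.prod_congr rfl hrest, ih, hfle, hflt, Finset.sum_insert hat]
    group
variable {s : ℕ}

lemma lcm_eq_sum (m : Fin s → Fin n → ℕ)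
    (hdisj : ∀ i j : Fin s, i ≠ j → ∀ t : Fin n, m i t = 0 ∨ m j t = 0)
    (τ : Finset (Fin s)) : lcmE m τ = ∑ j ∈ τ, m j := by
  induction τ using Finset.induction_on with
  | empty => funext t; simp [lcmE]
  | insert _ _ ha _ =>
    rename_i a τ' ih
    funext t
    have hsum : (∑ j ∈ insert a τ', m j) t = m a t + (∑ j ∈ τ', m j) t := by
      rw [Finset.sum_insert ha]; rfl
    have hsup : lcmE m (insert a τ') t = m a t ⊔ lcmE m τ' t := by
      simp [lcmE, Finset.sup_insert]
    rw [hsup, hsum, ih]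
    by_cases h : m a t = 0
    · simp [h]
    · have hz : ∀ j ∈ τ', m j t = 0 := fun j hj =>
        (hdisj a j (fun he => ha (he ▸ hj)) t).resolve_left h
      have : (∑ j ∈ τ', m j) t = 0 := by
        rw [Finset.sum_apply]; exact Finset.sum_eq_zero hz
      rw [this]
      simp

lemma lcm_insert_sub (m : Fin s → Fin n → ℕ)
    (hdisj : ∀ i j : Fin s, i ≠ j → ∀ t : Fin n, m i t = 0 ∨ m j t = 0)
    (τ : Finset (Fin s)) (i : Fin s) (hi : i ∉ τ) :
    lcmE m (insert i τ) - lcmE m τ = m i := by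
  rw [lcm_eq_sum m hdisj, lcm_eq_sum m hdisj, Finset.sum_insert hi]
  funext t
  show (m i t + (∑ j ∈ τ, m j) t) - (∑ j ∈ τ, m j) t = m i t
  omega
lemma key_units (S : SkewPoly k n R) (m : Fin s → Fin n → ℕ)
    (τ : Finset (Fin s)) (i : Fin s) (hi : i ∉ τ) :
    (∏ l ∈ τ, (S.C (∑ j ∈ τ.filter (· < l), m j) (m l))⁻¹)
        * (S.C (∑ j ∈ τ, m j) (m i))⁻¹
      = S.chi (m i) (∑ j ∈ τ.filter (fun j => i < j), m j)
        * ∏ l ∈ insert i τ, (S.C (∑ j ∈ (insert i τ).filter (· < l), m j) (m l))⁻¹ := by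
  have hne : ∀ j ∈ τ, j ≠ i := fun j hj he => hi (he ▸ hj)
  set A := ∑ j ∈ τ.filter (· < i), m j with hA
  set T := ∑ j ∈ τ.filter (fun j => i < j), m j with hT
  have hfilt : τ.filter (fun j => ¬ j < i) = τ.filter (fun j => i < j) := by
    apply Finset.filter_congr
    intro j hj
    constructor
    · exact fun h => lt_of_le_of_ne (not_lt.mp h) fun he => hne j hj he.symm
    · exact fun h => not_lt.mpr (le_of_lt h)
  have hsplitτ : ∑ j ∈ τ, m j = A + T := by
    rw [← Finset.sum_filter_add_sum_filter_not τ (· < i), hfilt]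
  -- expand the product over `insert i τ`
  rw [Finset.prod_insert hi]
  have hargi : (insert i τ).filter (· < i) = τ.filter (· < i) := by
    rw [Finset.filter_insert, if_neg (lt_irrefl i)]
  rw [hargi]
  have hl1 : ∀ l ∈ τ, (S.C (∑ j ∈ (insert i τ).filter (· < l), m j) (m l))⁻¹
      = (S.C ((if i < l then m i else 0) + ∑ j ∈ τ.filter (· < l), m j) (m l))⁻¹ := by
    intro l _
    rw [Finset.filter_insert]
    split_ifs with h
    · rw [Finset.sum_insert (fun hmem => hi (Finset.mem_filter.mp hmem).1)]
    · rw [zero_add]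
  rw [Finset.prod_congr rfl hl1]
  rw [← Finset.prod_filter_mul_prod_filter_not τ (fun l => i < l)
        (fun l => (S.C ((if i < l then m i else 0) + ∑ j ∈ τ.filter (· < l), m j) (m l))⁻¹),
      ← Finset.prod_filter_mul_prod_filter_not τ (fun l => i < l)
        (fun l => (S.C (∑ j ∈ τ.filter (· < l), m j) (m l))⁻¹)]
  have hl2 : ∀ l ∈ τ.filter (fun l => i < l),
      (S.C ((if i < l then m i else 0) + ∑ j ∈ τ.filter (· < l), m j) (m l))⁻¹
      = (S.C (m i + ∑ j ∈ τ.filter (· < l), m j) (m l))⁻¹ := by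
    intro l hl
    rw [if_pos (Finset.mem_filter.mp hl).2]
  have hl3 : ∀ l ∈ τ.filter (fun l => ¬ i < l),
      (S.C ((if i < l then m i else 0) + ∑ j ∈ τ.filter (· < l), m j) (m l))⁻¹
      = (S.C (∑ j ∈ τ.filter (· < l), m j) (m l))⁻¹ := by
    intro l hl
    rw [if_neg (Finset.mem_filter.mp hl).2, zero_add]
  rw [Finset.prod_congr rfl hl2, Finset.prod_congr rfl hl3]
  -- rewrite the arguments of the C's in the `i < l` part
  have hargs1 : ∀ l ∈ τ.filter (fun l => i < l),
      ∑ j ∈ τ.filter (· < l), m j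
        = A + ∑ j ∈ (τ.filter (fun l => i < l)).filter (· < l), m j := by
    intro l hl
    have hil : i < l := (Finset.mem_filter.mp hl).2
    rw [← Finset.sum_filter_add_sum_filter_not (τ.filter (· < l)) (· < i)]
    congr 1
    · apply Finset.sum_congr _ fun _ _ => rfl
      ext j
      simp only [Finset.mem_filter]
      exact ⟨fun ⟨⟨h1, _⟩, h3⟩ => ⟨h1, h3⟩, fun ⟨h1, h2⟩ => ⟨⟨h1, lt_trans h2 hil⟩, h2⟩⟩
    · apply Finset.sum_congr _ fun _ _ => rfl
      ext j
      simp only [Finset.mem_filter]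
      constructor
      · rintro ⟨⟨h1, h2⟩, h3⟩
        exact ⟨⟨h1, lt_of_le_of_ne (not_lt.mp h3) fun he => hne j h1 he.symm⟩, h2⟩
      · rintro ⟨⟨h1, h2⟩, h3⟩
        exact ⟨⟨h1, h3⟩, not_lt.mpr (le_of_lt h2)⟩
  have hargs2 : ∀ l ∈ τ.filter (fun l => i < l),
      (∑ j ∈ τ.filter (· < l), m j) + m l
        = A + ∑ j ∈ (τ.filter (fun l => i < l)).filter (· ≤ l), m j := by
    intro l hl
    have hle : (τ.filter (fun l => i < l)).filter (· ≤ l)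
        = insert l ((τ.filter (fun l => i < l)).filter (· < l)) := by
      ext j
      simp only [Finset.mem_filter, Finset.mem_insert]
      constructor
      · rintro ⟨h1, h2⟩
        rcases lt_or_eq_of_le h2 with h | h
        · exact Or.inr ⟨h1, h⟩
        · exact Or.inl h
      · rintro (h | ⟨h1, h2⟩)
        · exact ⟨h ▸ (Finset.mem_filter.mp hl), le_of_eq h⟩
        · exact ⟨h1, le_of_lt h2⟩
    rw [hle, Finset.sum_insert (by simp), hargs1 l hl]
    abel
  have hco : ∀ l ∈ τ.filter (fun l => i < l),
      (S.C (m i + ∑ j ∈ τ.filter (· < l), m j) (m l))⁻¹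
      = (S.C (m i) (A + ∑ j ∈ (τ.filter (fun l => i < l)).filter (· ≤ l), m j)
          * (S.C (m i) (A + ∑ j ∈ (τ.filter (fun l => i < l)).filter (· < l), m j))⁻¹)⁻¹
        * (S.C (∑ j ∈ τ.filter (· < l), m j) (m l))⁻¹ := by
    intro l hl
    rw [← hargs1 l hl, ← hargs2 l hl]
    have h2 : S.C (m i + ∑ j ∈ τ.filter (· < l), m j) (m l)
        = (S.C (m i) (∑ j ∈ τ.filter (· < l), m j))⁻¹
          * (S.C (∑ j ∈ τ.filter (· < l), m j) (m l)
             * S.C (m i) ((∑ j ∈ τ.filter (· < l), m j) + m l)) := by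
      rw [eq_inv_mul_iff_mul_eq]
      exact S.C_cocycle (m i) (∑ j ∈ τ.filter (· < l), m j) (m l)
    rw [h2]
    apply Additive.ofMul.injective
    simp only [ofMul_mul, ofMul_inv]
    abel
  have htel : ∏ l ∈ τ.filter (fun l => i < l),
      (S.C (m i) (A + ∑ j ∈ (τ.filter (fun l => i < l)).filter (· ≤ l), m j)
        * (S.C (m i) (A + ∑ j ∈ (τ.filter (fun l => i < l)).filter (· < l), m j))⁻¹)⁻¹
      = (S.C (m i) (A + T) * (S.C (m i) A)⁻¹)⁻¹ := by
    rw [Finset.prod_inv_distrib,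
      telescope_prod (fun w => S.C (m i) w) m A (τ.filter (fun l => i < l)), ← hT]
  rw [Finset.prod_congr rfl hco, Finset.prod_mul_distrib, htel, hsplitτ]
  rw [S.C_skew (m i) (A + T), S.C_skew (m i) A, S.chi_add_right (m i) A T]
  apply Additive.ofMul.injective
  simp only [ofMul_mul, ofMul_inv]
  abel
end Lemmas

/-- if `m_1,…,m_s` have pairwise disjoint supports, then the skew Koszul complex
and the skew Taylor complex are isomorphic via the chain isomorphism
`ψ(e_σ) = e_σ · Π_{r=2}^{j} C(m_{i_1}*⋯*m_{i_{r-1}}, m_{i_r})⁻¹`. -/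
theorem koszul_iso_taylor {k : Type} [Field k] {n : ℕ} {R : Type} [Ring R] [Algebra k R]
    {s : ℕ} (S : SkewPoly k n R) (m : Fin s → Fin n → ℕ)
    (hdisj : ∀ i j : Fin s, i ≠ j → ∀ t : Fin n, m i t = 0 ∨ m j t = 0) :
    Function.Bijective
      (fun (f : Finset (Fin s) → R) => fun σ : Finset (Fin s) =>
        ((∏ i ∈ σ, ((S.C (∑ j ∈ σ.filter (· < i), m j) (m i))⁻¹ : kˣ) : kˣ) : k) • f σ) ∧
    ∀ f : Finset (Fin s) → R,
      (fun σ : Finset (Fin s) =>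
          ((∏ i ∈ σ, ((S.C (∑ j ∈ σ.filter (· < i), m j) (m i))⁻¹ : kˣ) : kˣ) : k) •
            taylorD S m 0 f σ) =
        koszulD S m (fun σ : Finset (Fin s) =>
          ((∏ i ∈ σ, ((S.C (∑ j ∈ σ.filter (· < i), m j) (m i))⁻¹ : kˣ) : kˣ) : k) • f σ) := by
  constructor
  · apply Function.bijective_iff_has_inverse.mpr
    refine ⟨fun g σ =>
      ((((∏ i ∈ σ, ((S.C (∑ j ∈ σ.filter (· < i), m j) (m i))⁻¹ : kˣ) : kˣ))⁻¹ : kˣ) : k) • g σ,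
      fun f => funext fun σ => ?_, fun g => funext fun σ => ?_⟩
    · simp only [smul_smul, ← Units.val_mul, inv_mul_cancel, Units.val_one, one_smul]
    · simp only [smul_smul, ← Units.val_mul, mul_inv_cancel, Units.val_one, one_smul]
  · intro f
    funext τ
    simp only [taylorD, koszulD]
    rw [Finset.smul_sum]
    apply Finset.sum_congr rfl
    intro i hic
    have hi : i ∉ τ := by simpa using hic
    have e1 : lcmE m τ + 0 = ∑ j ∈ τ, m j := by
      rw [add_zero, lcm_eq_sum m hdisj]
    have e2 : lcmE m (insert i τ) - lcmE m τ = m i := lcm_insert_sub m hdisj τ i hi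
    rw [e1, e2]
    have hrw : ∀ (c : kˣ) (F : R),
        (-1 : R) ^ ((τ.filter (· < i)).card) * algebraMap k R (c : k) * S.mono (m i) * F
          = (c : k) • ((-1 : R) ^ ((τ.filter (· < i)).card) * (S.mono (m i) * F)) := by
      intro c F
      rw [mul_assoc, mul_assoc, ← Algebra.smul_def, mul_smul_comm]
    rw [hrw ((S.C (∑ j ∈ τ, m j) (m i))⁻¹) (f (insert i τ)), smul_smul, mul_smul_comm,
      hrw (S.chi (m i) (∑ j ∈ τ.filter (fun j => i < j), m j)) (f (insert i τ)), smul_smul]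
    congr 1
    have hkey := congrArg Units.val (key_units S m τ i hi)
    push_cast at hkey ⊢
    linear_combination hkey
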